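/- An earliest transiting occurrence h_i^e of an N-node serial episode α is not a minimal occurrence if and only if the next earliest transiting occurrence h_{i+1}^e exists and satisfies h_i^e(v_N) = h_{i+1}^e(v_N). -/

import Mathlib

variable {A : Type}

/-- An occurrence of the (N+1)-node serial episode `α` in the event sequence
`E` (of length `n`): a strictly increasing index map matching the event-types. -/
def IsOcc (E : ℕ → A) (n : ℕ) {N : ℕ} (α : Fin (N+1) → A) (h : Fin (N+1) → ℕ) : Prop :=
  StrictMono h ∧ (∀ i, h i < n) ∧ (∀ i, E (h i) = α i)

/-- Earliest transiting occurrence: each `h i.succ` is the least index after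
`h i.castSucc` carrying event-type `α i.succ`. -/
def IsET (E : ℕ → A) (n : ℕ) {N : ℕ} (α : Fin (N+1) → A) (h : Fin (N+1) → ℕ) : Prop :=
  IsOcc E n α h ∧ ∀ (i : Fin N) (j : ℕ), h i.castSucc < j → E j = α i.succ → h i.succ ≤ j

/-- Lexicographic order on occurrences. -/
def OccLex {N : ℕ} (h1 h2 : Fin (N+1) → ℕ) : Prop :=
  ∃ i, (∀ k < i, h1 k = h2 k) ∧ h1 i < h2 i

/-- The window `[a, b]` contains an occurrence of `α`. -/
def WindowHasOcc (E : ℕ → A) (n : ℕ) {N : ℕ} (α : Fin (N+1) → A) (a b : ℕ) : Prop :=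
  ∃ h, IsOcc E n α h ∧ a ≤ h 0 ∧ h (Fin.last N) ≤ b

/-- `[a, b]` is a minimal window of `α`: it contains an occurrence and no
proper subwindow contains one. -/
def IsMinWindow (E : ℕ → A) (n : ℕ) {N : ℕ} (α : Fin (N+1) → A) (a b : ℕ) : Prop :=
  WindowHasOcc E n α a b ∧
    ∀ c d, a ≤ c → d ≤ b → (a < c ∨ d < b) → ¬ WindowHasOcc E n α c d

/-- A minimal occurrence: its window is a minimal window. -/
def IsMinOcc (E : ℕ → A) (n : ℕ) {N : ℕ} (α : Fin (N+1) → A) (h : Fin (N+1) → ℕ) : Prop :=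
  IsOcc E n α h ∧ IsMinWindow E n α (h 0) (h (Fin.last N))

/-- `h'` is the earliest transiting occurrence immediately following `h`
in the lexicographic enumeration of earliest transiting occurrences. -/
def NextET (E : ℕ → A) (n : ℕ) {N : ℕ} (α : Fin (N+1) → A) (h h' : Fin (N+1) → ℕ) : Prop :=
  IsET E n α h ∧ IsET E n α h' ∧ OccLex h h' ∧
    ¬ ∃ g, IsET E n α g ∧ OccLex h g ∧ OccLex g h'

/-- `h1 <⋆ h2` are non-interleaved: `h2 (v_j) ≥ h1 (v_{j+1})` for all `j < N`. -/
def NonInterleaved {N : ℕ} (h1 h2 : Fin (N+1) → ℕ) : Prop :=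
  ∀ i : Fin N, h1 i.succ ≤ h2 i.castSucc

/-- Non-overlapped occurrences: one ends strictly before the other begins. -/
def NonOverlapped {N : ℕ} (h1 h2 : Fin (N+1) → ℕ) : Prop :=
  h1 (Fin.last N) < h2 0 ∨ h2 (Fin.last N) < h1 0


open Fin.NatCast

-- comparison lemma
lemma et_le (E : ℕ → A) (n : ℕ) {N : ℕ} (α : Fin (N+1) → A)
    {h g : Fin (N+1) → ℕ} (hET : IsET E n α h) (hg : IsOcc E n α g)
    (h0 : h 0 ≤ g 0) : ∀ i, h i ≤ g i := by
  intro i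
  induction i using Fin.induction with
  | zero => exact h0
  | succ i ih =>
      refine hET.2 i (g i.succ) ?_ (hg.2.2 i.succ)
      exact lt_of_le_of_lt ih (hg.1 (Fin.castSucc_lt_succ (i := i)))

lemma et_unique (E : ℕ → A) (n : ℕ) {N : ℕ} (α : Fin (N+1) → A)
    {h g : Fin (N+1) → ℕ} (hET : IsET E n α h) (hg : IsET E n α g)
    (h0 : h 0 = g 0) : h = g :=
  funext fun i => le_antisymm (et_le E n α hET hg.1 h0.le i)
    (et_le E n α hg hET.1 h0.ge i)

lemma occLex_iff (E : ℕ → A) (n : ℕ) {N : ℕ} (α : Fin (N+1) → A)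
    {h g : Fin (N+1) → ℕ} (hET : IsET E n α h) (hg : IsET E n α g) :
    OccLex h g ↔ h 0 < g 0 := by
  constructor
  · rintro ⟨i, -, hi⟩
    by_contra hle
    push_neg at hle
    exact absurd (et_le E n α hg hET.1 hle i) (not_le_of_gt hi)
  · intro h0
    exact ⟨0, fun k hk => absurd hk (Fin.not_lt_zero k), h0⟩

open Classical in
noncomputable def etSeq (E : ℕ → A) {N : ℕ} (α : Fin (N+1) → A) (a : ℕ) : ℕ → ℕ
  | 0 => a
  | k+1 =>
      if hk : ∃ j, etSeq E α a k < j ∧ E j = α ((k+1 : ℕ) : Fin (N+1)) then Nat.find hk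
      else 0

open Classical in
lemma etSeq_le (E : ℕ → A) (n : ℕ) {N : ℕ} (α : Fin (N+1) → A)
    {g : Fin (N+1) → ℕ} (hg : IsOcc E n α g) :
    ∀ k (hk : k < N+1), etSeq E α (g 0) k ≤ g ⟨k, hk⟩ := by
  intro k
  induction k with
  | zero => intro hk; simp [etSeq]
  | succ k ih =>
      intro hk
      have hk' : k < N+1 := by omega
      have hcast : ((k+1 : ℕ) : Fin (N+1)) = ⟨k+1, hk⟩ := by
        ext; rw [Fin.val_natCast, Nat.mod_eq_of_lt hk]
      have hlt : g ⟨k, hk'⟩ < g ⟨k+1, hk⟩ := hg.1 (by simp [Fin.lt_iff_val_lt_val])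
      have hex : ∃ j, etSeq E α (g 0) k < j ∧ E j = α ((k+1 : ℕ) : Fin (N+1)) :=
        ⟨g ⟨k+1, hk⟩, lt_of_le_of_lt (ih hk') hlt, by rw [hcast]; exact hg.2.2 _⟩
      show (if hk : _ then Nat.find hk else 0) ≤ _
      rw [dif_pos hex]
      exact Nat.find_le ⟨lt_of_le_of_lt (ih hk') hlt, by rw [hcast]; exact hg.2.2 _⟩

open Classical in
lemma etSeq_isET (E : ℕ → A) (n : ℕ) {N : ℕ} (α : Fin (N+1) → A)
    {g : Fin (N+1) → ℕ} (hg : IsOcc E n α g) :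
    IsET E n α (fun i : Fin (N+1) => etSeq E α (g 0) i.val) := by
  -- spec for each step
  have hex : ∀ k (hk : k+1 < N+1),
      ∃ j, etSeq E α (g 0) k < j ∧ E j = α ((k+1 : ℕ) : Fin (N+1)) := by
    intro k hk
    have hk' : k < N+1 := by omega
    have hcast : ((k+1 : ℕ) : Fin (N+1)) = ⟨k+1, hk⟩ := by
      ext; rw [Fin.val_natCast, Nat.mod_eq_of_lt hk]
    have hlt : g ⟨k, hk'⟩ < g ⟨k+1, hk⟩ := hg.1 (by simp [Fin.lt_iff_val_lt_val])
    exact ⟨g ⟨k+1, hk⟩, lt_of_le_of_lt (etSeq_le E n α hg k hk') hlt,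
      by rw [hcast]; exact hg.2.2 _⟩
  have hstep : ∀ k (hk : k+1 < N+1),
      etSeq E α (g 0) k < etSeq E α (g 0) (k+1) ∧
      E (etSeq E α (g 0) (k+1)) = α ((k+1 : ℕ) : Fin (N+1)) ∧
      ∀ j, etSeq E α (g 0) k < j → E j = α ((k+1 : ℕ) : Fin (N+1)) →
        etSeq E α (g 0) (k+1) ≤ j := by
    intro k hk
    have h1 : etSeq E α (g 0) (k+1) = Nat.find (hex k hk) := by
      show (if hk : _ then Nat.find hk else 0) = _
      rw [dif_pos (hex k hk)]
    refine ⟨?_, ?_, ?_⟩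
    · rw [h1]; exact (Nat.find_spec (hex k hk)).1
    · rw [h1]; exact (Nat.find_spec (hex k hk)).2
    · intro j hj1 hj2; rw [h1]; exact Nat.find_le ⟨hj1, hj2⟩
  have hcastsucc : ∀ i : Fin N, ((i.val + 1 : ℕ) : Fin (N+1)) = i.succ := by
    intro i; ext
    rw [Fin.val_succ, Fin.val_natCast, Nat.mod_eq_of_lt (Nat.succ_lt_succ i.isLt)]
  refine ⟨⟨?_, ?_, ?_⟩, ?_⟩
  · rw [Fin.strictMono_iff_lt_succ]
    intro i
    exact (hstep i.val (Nat.succ_lt_succ i.isLt)).1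
  · intro i
    exact lt_of_le_of_lt (etSeq_le E n α hg i.val i.isLt)
      (by have := hg.2.1 ⟨i.val, i.isLt⟩; simpa using this)
  · intro i
    rcases Nat.eq_zero_or_eq_succ_pred i.val with h0 | hsuc
    · have : i = 0 := Fin.ext h0
      subst this
      show E (etSeq E α (g 0) 0) = α 0
      simpa [etSeq] using hg.2.2 0
    · set k := i.val - 1
      have hik : i.val = k + 1 := hsuc
      have hk : k + 1 < N + 1 := hik ▸ i.isLt
      have := (hstep k hk).2.1
      have hi : ((k+1:ℕ) : Fin (N+1)) = i := by
        ext; rw [Fin.val_natCast, Nat.mod_eq_of_lt hk, hik]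
      rw [hi] at this
      simpa [hik] using this
  · intro i j hj1 hj2
    have := (hstep i.val (Nat.succ_lt_succ i.isLt)).2.2 j
      (by simpa [Fin.coe_castSucc] using hj1)
      (by rw [hcastsucc i]; exact hj2)
    simpa [Fin.val_succ] using this

open Classical in
theorem stmt2 (E : ℕ → A) (n : ℕ) {N : ℕ} (α : Fin (N+1) → A)
    (h : Fin (N+1) → ℕ) (hET : IsET E n α h) :
    ¬ IsMinOcc E n α h ↔
      ∃ h', NextET E n α h h' ∧ h (Fin.last N) = h' (Fin.last N) := by
  constructor
  · intro hnm
    have hocc : IsOcc E n α h := hET.1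
    have hw : WindowHasOcc E n α (h 0) (h (Fin.last N)) :=
      ⟨h, hocc, le_refl _, le_refl _⟩
    have hnmw : ¬ IsMinWindow E n α (h 0) (h (Fin.last N)) := fun hmw => hnm ⟨hocc, hmw⟩
    rw [IsMinWindow, not_and] at hnmw
    have := hnmw hw
    push_neg at this
    obtain ⟨c, d, hc, hd, hcd, g, hgocc, hcg, hgd⟩ := this
    -- h last ≤ g last
    have hg0 : h 0 ≤ g 0 := le_trans hc hcg
    have hlastle : h (Fin.last N) ≤ g (Fin.last N) := et_le E n α hET hgocc hg0 _
    have hclt : h 0 < g 0 := by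
      rcases hcd with h1 | h1
      · exact lt_of_lt_of_le h1 hcg
      · exact absurd (le_trans hlastle hgd) (not_le_of_gt h1)
    -- the ET occurrence starting at g 0
    set k : Fin (N+1) → ℕ := fun i => etSeq E α (g 0) i.val with hk
    have hkET : IsET E n α k := etSeq_isET E n α hgocc
    have hk0 : k 0 = g 0 := rfl
    have hkle : ∀ i, k i ≤ g i := fun i =>
      by simpa using etSeq_le E n α hgocc i.val i.isLt
    -- least start of an ET occurrence strictly after h 0
    have hexm : ∃ m, ∃ g', IsET E n α g' ∧ g' 0 = m ∧ h 0 < m :=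
      ⟨g 0, k, hkET, hk0, hclt⟩
    obtain ⟨h', h'ET, h'0, hlt0⟩ := Nat.find_spec hexm
    refine ⟨h', ⟨hET, h'ET, (occLex_iff E n α hET h'ET).mpr (h'0 ▸ hlt0), ?_⟩, ?_⟩
    · rintro ⟨g'', g''ET, hl1, hl2⟩
      have h1 : h 0 < g'' 0 := (occLex_iff E n α hET g''ET).mp hl1
      have h2 : g'' 0 < h' 0 := (occLex_iff E n α g''ET h'ET).mp hl2
      exact Nat.find_min hexm (h'0 ▸ h2) ⟨g'', g''ET, rfl, h1⟩
    · have hle1 : h (Fin.last N) ≤ h' (Fin.last N) :=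
        et_le E n α hET h'ET.1 (le_of_lt (h'0 ▸ hlt0)) _
      have h'le : h' 0 ≤ k 0 := h'0 ▸ Nat.find_le ⟨k, hkET, hk0, hclt⟩
      have hle2 : h' (Fin.last N) ≤ k (Fin.last N) :=
        et_le E n α h'ET hkET.1 h'le _
      have hle3 : k (Fin.last N) ≤ h (Fin.last N) :=
        le_trans (hkle _) (le_trans hgd hd)
      exact le_antisymm hle1 (le_trans hle2 hle3)
  · rintro ⟨h', ⟨-, h'ET, hlex, -⟩, heq⟩ hmin
    have h0lt : h 0 < h' 0 := (occLex_iff E n α hET h'ET).mp hlex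
    exact hmin.2.2 (h' 0) (h' (Fin.last N)) h0lt.le heq.ge (Or.inl h0lt)
      ⟨h', h'ET.1, le_refl _, le_refl _⟩
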